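/- Let U ⊆ ℂ be open with T ≠ 0, T³ ≠ 1 and T³ ≠ −8 for all T ∈ U, let V ⊆ ℂ be open with T³ ∈ V and T³·(T³−1)·(T³+8) ≠ 0 for all T ∈ U, let ψ solve ψ'' = Q₃·ψ on V, and let g : ℂ → ℂ be twice differentiable and nonvanishing on U with g(T)² = 3T² for all T ∈ U. Then Φ(T) := ψ(T³)/g(T) solves Φ''(T) = −(1/4)·(T⁶−20T³−8)²/(T²(T³+8)²(T³−1)²)·Φ(T) on U. -/

import Mathlib

open Complex

/-- `f` solves the equation `ψ'' = Q·ψ` on the open set `U`. -/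
def SolvesOn (Q f : ℂ → ℂ) (U : Set ℂ) : Prop :=
  (∀ x ∈ U, DifferentiableAt ℂ f x) ∧ (∀ x ∈ U, DifferentiableAt ℂ (deriv f) x) ∧
    ∀ x ∈ U, deriv (deriv f) x = Q x * f x

/-- The coefficient of the normal form (3') of the third Chudnovsky equation. -/
noncomputable def Q₃ (x : ℂ) : ℂ :=
  -(1 / 4) * (x ^ 4 + 8 * x ^ 3 + 72 * x ^ 2 - 64 * x + 64)
    / (x ^ 2 * (x - 1) ^ 2 * (x + 8) ^ 2)

theorem chudnovsky_three_cube_substitution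
    (U V : Set ℂ) (hU : IsOpen U) (hV : IsOpen V)
    (hT0 : ∀ T ∈ U, T ≠ 0)
    (hT1 : ∀ T ∈ U, T ^ 3 ≠ 1)
    (hT8 : ∀ T ∈ U, T ^ 3 ≠ -8)
    (hTV : ∀ T ∈ U, T ^ 3 ∈ V)
    (hVne : ∀ T ∈ U, T ^ 3 * (T ^ 3 - 1) * (T ^ 3 + 8) ≠ 0)
    (ψ g : ℂ → ℂ)
    (hψ : SolvesOn Q₃ ψ V)
    (hg1 : ∀ T ∈ U, DifferentiableAt ℂ g T)
    (hg2 : ∀ T ∈ U, DifferentiableAt ℂ (deriv g) T)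
    (hgne : ∀ T ∈ U, g T ≠ 0)
    (hgsq : ∀ T ∈ U, g T ^ 2 = 3 * T ^ 2) :
    SolvesOn (fun T => -(1 / 4) * (T ^ 6 - 20 * T ^ 3 - 8) ^ 2
        / (T ^ 2 * (T ^ 3 + 8) ^ 2 * (T ^ 3 - 1) ^ 2))
      (fun T => ψ (T ^ 3) / g T) U := by
  obtain ⟨hψ1, hψ2, hψ3⟩ := hψ
  have hcube : ∀ T : ℂ, HasDerivAt (fun t : ℂ => t ^ 3) (3 * T ^ 2) T := by
    intro T
    have := hasDerivAt_pow 3 T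
    norm_num at this; exact this
  -- deriv g = 3T / g on U
  have hgd : ∀ T ∈ U, deriv g T = 3 * T / g T := by
    intro T hT
    have heq : (fun t => g t ^ 2) =ᶠ[nhds T] (fun t => 3 * t ^ 2) := by
      filter_upwards [hU.mem_nhds hT] with t ht using hgsq t ht
    have h1 : HasDerivAt (fun t => g t ^ 2) (2 * g T * deriv g T) T := by
      have := ((hg1 T hT).hasDerivAt).pow 2
      norm_num at this
      exact this
    have h2 : HasDerivAt (fun t : ℂ => 3 * t ^ 2) (3 * (2 * T)) T := by
      have := ((hasDerivAt_pow 2 T).const_mul (3:ℂ))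
      norm_num at this
      convert this using 1
    have h3 := heq.deriv_eq
    rw [h1.deriv, h2.deriv] at h3
    have hg0 := hgne T hT
    field_simp
    linear_combination h3 / 2
  -- ψ ∘ cube has derivative
  have hcomp : ∀ T ∈ U, HasDerivAt (fun t => ψ (t ^ 3)) (deriv ψ (T ^ 3) * (3 * T ^ 2)) T := by
    intro T hT
    exact ((hψ1 _ (hTV T hT)).hasDerivAt).comp T (hcube T)
  -- first derivative of Φ
  have key : ∀ T ∈ U, deriv (fun t => ψ (t ^ 3) / g t) T
      = deriv ψ (T ^ 3) * g T - ψ (T ^ 3) / (T * g T) := by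
    intro T hT
    have hd := ((hcomp T hT).div ((hg1 T hT).hasDerivAt) (hgne T hT)).deriv
    have hg0 := hgne T hT
    have hT0' := hT0 T hT
    have hsq := hgsq T hT
    rw [hgd T hT, hsq] at hd
    rw [show (fun t => ψ (t ^ 3) / g t) = (fun t => ψ (t ^ 3)) / g from rfl, hd]
    field_simp
  constructor
  · intro T hT
    exact (((hψ1 _ (hTV T hT)).comp T (differentiableAt_pow 3)).div (hg1 T hT) (hgne T hT))
  have hφd : ∀ T ∈ U, HasDerivAt (fun t => deriv ψ (t ^ 3) * g t - ψ (t ^ 3) / (t * g t))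
      ((deriv (deriv ψ) (T ^ 3) * (3 * T ^ 2)) * g T + deriv ψ (T ^ 3) * deriv g T
        - (deriv ψ (T ^ 3) * (3 * T ^ 2) * (T * g T)
            - ψ (T ^ 3) * (1 * g T + T * deriv g T)) / (T * g T) ^ 2) T := by
    intro T hT
    have h1 : HasDerivAt (fun t => deriv ψ (t ^ 3)) (deriv (deriv ψ) (T ^ 3) * (3 * T ^ 2)) T :=
      by have := ((hψ2 _ (hTV T hT)).hasDerivAt).comp T (hcube T); exact this
    have h2 := (hg1 T hT).hasDerivAt
    have h4 : HasDerivAt (fun t => t * g t) (1 * g T + T * deriv g T) T :=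
      (hasDerivAt_id T).mul h2
    have hne : T * g T ≠ 0 := mul_ne_zero (hT0 T hT) (hgne T hT)
    exact (h1.mul h2).sub ((hcomp T hT).div h4 hne)
  have hEq : ∀ T ∈ U, deriv (fun t => ψ (t ^ 3) / g t) =ᶠ[nhds T]
      (fun t => deriv ψ (t ^ 3) * g t - ψ (t ^ 3) / (t * g t)) := by
    intro T hT
    filter_upwards [hU.mem_nhds hT] with t ht using key t ht
  constructor
  · intro T hT
    exact ((hφd T hT).differentiableAt).congr_of_eventuallyEq (hEq T hT)
  · intro T hT
    have hg0 := hgne T hT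
    have h0 := hT0 T hT
    have h1 : (T:ℂ) ^ 3 - 1 ≠ 0 := sub_ne_zero.mpr (hT1 T hT)
    have h8 : (T:ℂ) ^ 3 + 8 ≠ 0 := by
      intro h; exact hT8 T hT (by linear_combination h)
    have hsq := hgsq T hT
    have h3 : (T:ℂ) ^ 3 ≠ 0 := pow_ne_zero 3 h0
    have hD1 : T ^ 2 * (T ^ 3 + 8) ^ 2 * (T ^ 3 - 1) ^ 2 ≠ 0 :=
      mul_ne_zero (mul_ne_zero (pow_ne_zero 2 h0) (pow_ne_zero 2 h8)) (pow_ne_zero 2 h1)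
    have hD2 : ((T ^ 3) ^ 2 * (T ^ 3 - 1) ^ 2 * (T ^ 3 + 8) ^ 2 : ℂ) ≠ 0 :=
      mul_ne_zero (mul_ne_zero (pow_ne_zero 2 h3) (pow_ne_zero 2 h1)) (pow_ne_zero 2 h8)
    have hcoef : -(1 / 4) * (T ^ 6 - 20 * T ^ 3 - 8) ^ 2
        / (T ^ 2 * (T ^ 3 + 8) ^ 2 * (T ^ 3 - 1) ^ 2)
        = 9 * T ^ 4 * Q₃ (T ^ 3) + 2 / T ^ 2 := by
      have step1 : 9 * T ^ 4 * Q₃ (T ^ 3)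
          = (9 * T ^ 4 * (-(1 / 4) * ((T ^ 3) ^ 4 + 8 * (T ^ 3) ^ 3 + 72 * (T ^ 3) ^ 2 - 64 * T ^ 3 + 64)))
            / ((T ^ 3) ^ 2 * (T ^ 3 - 1) ^ 2 * (T ^ 3 + 8) ^ 2) := by
        rw [Q₃]; ring
      have step2 : (9 * T ^ 4 * (-(1 / 4) * ((T ^ 3) ^ 4 + 8 * (T ^ 3) ^ 3 + 72 * (T ^ 3) ^ 2 - 64 * T ^ 3 + 64)))
            / ((T ^ 3) ^ 2 * (T ^ 3 - 1) ^ 2 * (T ^ 3 + 8) ^ 2)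
          = (9 * (-(1 / 4) * ((T ^ 3) ^ 4 + 8 * (T ^ 3) ^ 3 + 72 * (T ^ 3) ^ 2 - 64 * T ^ 3 + 64)))
            / (T ^ 2 * (T ^ 3 + 8) ^ 2 * (T ^ 3 - 1) ^ 2) :=
        (div_eq_div_iff hD2 hD1).mpr (by ring)
      have step3 : (2 : ℂ) / T ^ 2
          = (2 * (T ^ 3 + 8) ^ 2 * (T ^ 3 - 1) ^ 2) / (T ^ 2 * (T ^ 3 + 8) ^ 2 * (T ^ 3 - 1) ^ 2) :=
        (div_eq_div_iff (pow_ne_zero 2 h0) hD1).mpr (by ring)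
      rw [step1, step2, step3, ← add_div, div_eq_div_iff hD1 hD1]
      ring
    show deriv (deriv fun t => ψ (t ^ 3) / g t) T
        = -(1 / 4) * (T ^ 6 - 20 * T ^ 3 - 8) ^ 2
          / (T ^ 2 * (T ^ 3 + 8) ^ 2 * (T ^ 3 - 1) ^ 2) * (ψ (T ^ 3) / g T)
    rw [(hEq T hT).deriv_eq, (hφd T hT).deriv, hgd T hT, hψ3 _ (hTV T hT), hcoef]
    field_simp
    linear_combination (3 * Q₃ (T ^ 3) * ψ (T ^ 3) * T ^ 4 * g T ^ 2
      - ψ (T ^ 3)) * hsq
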